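/- arXiv:math/0602260 — 4 statements merged into one kernel-verified Lean document; each statement's English description precedes it below -/
import Mathlib

section
/- (Riemann's addition formula) For nonzero complex numbers x, y, u, v and complex p with |p| < 1, one has θ(xy;p)θ(x/y;p)θ(uv;p)θ(u/v;p) - θ(xv;p)θ(x/v;p)θ(uy;p)θ(u/y;p) = (u/y)·θ(yv;p)θ(y/v;p)θ(xu;p)θ(x/u;p). -/
open Finset

noncomputable def pochInf (x p : ℂ) : ℂ := ∏' k : ℕ, (1 - x * p ^ k)

noncomputable def theta (x p : ℂ) : ℂ := pochInf x p * pochInf (p / x) p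

noncomputable def qps (a q p : ℂ) (n : ℤ) : ℂ :=
  if 0 ≤ n then ∏ k ∈ Finset.range n.toNat, theta (a * q ^ (k : ℤ)) p
  else (∏ k ∈ Finset.range (-n).toNat, theta (a * q ^ (n + k)) p)⁻¹

namespace RTA

open Filter Topology Metric

variable {p x : ℂ}

lemma log_bound {z : ℂ} (hz : ‖z‖ ≤ 1/2) : ‖Complex.log (1 - z)‖ ≤ 2 * ‖z‖ := by
  have h0 : (0:ℝ) ≤ ‖z‖ := norm_nonneg z
  have h1 : ‖(-z)‖ < 1 := by rw [norm_neg]; linarith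
  have h2 := Complex.norm_log_one_add_le h1
  rw [show (1:ℂ) + -z = 1 - z by ring, norm_neg] at h2
  have h3 : (1 - ‖z‖)⁻¹ ≤ 2 := by
    rw [show (2:ℝ) = (1/2 : ℝ)⁻¹ by norm_num]
    exact (inv_anti₀ (by norm_num) (by linarith))
  have h4 : (0:ℝ) ≤ (1 - ‖z‖)⁻¹ := inv_nonneg.mpr (by linarith)
  nlinarith [sq_nonneg ‖z‖]

lemma exists_N (hp : ‖p‖ < 1) (R : ℝ) : ∃ N : ℕ, R * ‖p‖ ^ N ≤ 1/2 := by
  rcases le_or_gt R 0 with h | h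
  · exact ⟨0, by simp; nlinarith⟩
  · obtain ⟨N, hN⟩ := exists_pow_lt_of_lt_one (show (0:ℝ) < 1/(2*R) by positivity) hp
    refine ⟨N, ?_⟩
    have := mul_lt_mul_of_pos_left hN h
    rw [mul_one_div] at this
    have : R * ‖p‖ ^ N < 1/2 := by
      calc R * ‖p‖ ^ N < R * (1/(2*R)) := by
            exact mul_lt_mul_of_pos_left hN h
        _ = 1/2 := by field_simp
    linarith

lemma summable_log (hp : ‖p‖ < 1) (x : ℂ) :
    Summable fun k : ℕ => Complex.log (1 - x * p ^ k) := by
  obtain ⟨N, hN⟩ := exists_N hp ‖x‖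
  rw [← summable_nat_add_iff N]
  apply Summable.of_norm_bounded (g := fun k => ‖p‖ ^ k)
    (summable_geometric_of_lt_one (norm_nonneg p) hp)
  intro k
  have hpk : (0:ℝ) ≤ ‖p‖ ^ k := by positivity
  have hpk1 : ‖p‖ ^ k ≤ 1 := pow_le_one₀ (norm_nonneg p) hp.le
  have hsm : ‖x * p ^ (k + N)‖ ≤ (1/2) * ‖p‖ ^ k := by
    rw [norm_mul, norm_pow, pow_add]
    calc ‖x‖ * (‖p‖ ^ k * ‖p‖ ^ N) = (‖x‖ * ‖p‖ ^ N) * ‖p‖ ^ k := by ring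
      _ ≤ (1/2) * ‖p‖ ^ k := by
          apply mul_le_mul_of_nonneg_right hN hpk
  calc ‖Complex.log (1 - x * p ^ (k + N))‖ ≤ 2 * ‖x * p ^ (k+N)‖ :=
        log_bound (by nlinarith)
    _ ≤ ‖p‖ ^ k := by nlinarith

lemma hasProd_of_zero {f : ℕ → ℂ} {k : ℕ} (h : f k = 0) : HasProd f 0 := by
  have hev : ∀ᶠ s : Finset ℕ in atTop, (0:ℂ) = ∏ i ∈ s, f i := by
    filter_upwards [eventually_ge_atTop ({k} : Finset ℕ)] with s hs
    exact (Finset.prod_eq_zero (hs (Finset.mem_singleton_self k)) h).symm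
  exact Tendsto.congr' hev tendsto_const_nhds

lemma pochInf_eq_zero {k : ℕ} (h : x * p ^ k = 1) : pochInf x p = 0 :=
  (hasProd_of_zero (f := fun k => 1 - x * p ^ k) (k := k)
    (by show 1 - x * p ^ k = 0; rw [h]; ring)).tprod_eq

lemma tprod_cexp {g : ℕ → ℂ} (h0 : ∀ k, g k ≠ 0)
    (hs : Summable fun k => Complex.log (g k)) :
    ∏' k, g k = Complex.exp (∑' k, Complex.log (g k)) := by
  have := Complex.cexp_tsum_eq_tprod h0 hs
  exact this.symm

lemma pochInf_eq_exp (hp : ‖p‖ < 1) (h : ∀ k : ℕ, x * p ^ k ≠ 1) :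
    pochInf x p = Complex.exp (∑' k : ℕ, Complex.log (1 - x * p ^ k)) :=
  tprod_cexp (fun k hc => h k (by linear_combination -hc)) (summable_log hp x)

lemma pochInf_ne_zero (hp : ‖p‖ < 1) (h : ∀ k : ℕ, x * p ^ k ≠ 1) :
    pochInf x p ≠ 0 := by
  rw [pochInf_eq_exp hp h]; exact Complex.exp_ne_zero _

lemma small_ne_one (hp : ‖p‖ < 1) (hx : ‖x‖ < 1) : ∀ k : ℕ, x * p ^ k ≠ 1 := by
  intro k hc
  have h1 : ‖x * p ^ k‖ < 1 := by
    rw [norm_mul, norm_pow]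
    calc ‖x‖ * ‖p‖ ^ k ≤ ‖x‖ * 1 := by
          exact mul_le_mul_of_nonneg_left (pow_le_one₀ (norm_nonneg p) hp.le) (norm_nonneg x)
      _ < 1 := by rwa [mul_one]
  rw [hc, norm_one] at h1; linarith

lemma pochInf_peel (hp : ‖p‖ < 1) (x : ℂ) :
    pochInf x p = (1 - x) * pochInf (x * p) p := by
  by_cases hzero : ∃ k : ℕ, x * p ^ k = 1
  · obtain ⟨k, hk⟩ := hzero
    rcases k with _ | j
    · rw [pochInf_eq_zero hk]
      rw [pow_zero, mul_one] at hk
      rw [hk]; ring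
    · have h2 : (x * p) * p ^ j = 1 := by
        rw [pow_succ] at hk; linear_combination hk
      rw [pochInf_eq_zero hk, pochInf_eq_zero h2, mul_zero]
  · push_neg at hzero
    have h1 : ∀ k : ℕ, (x * p) * p ^ k ≠ 1 := fun k hc => by
      apply hzero (k+1)
      rw [pow_succ]; linear_combination hc
    rw [pochInf_eq_exp hp hzero, pochInf_eq_exp hp h1]
    rw [Summable.tsum_eq_zero_add (summable_log hp x), Complex.exp_add]
    congr 1
    · rw [pow_zero, mul_one]
      exact Complex.exp_log (sub_ne_zero.mpr fun hc => hzero 0 (by rw [pow_zero, mul_one, ← hc]))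
    · congr 1
      apply tsum_congr
      intro k
      congr 1
      rw [pow_succ]; ring


lemma theta_factor (hp : ‖p‖ < 1) (x : ℂ) :
    theta x p = (1 - x) * (pochInf (x * p) p * pochInf (p / x) p) := by
  unfold theta; rw [pochInf_peel hp x]; ring

lemma theta_one : theta 1 p = 0 := by
  unfold theta
  rw [pochInf_eq_zero (k := 0) (by rw [pow_zero, mul_one]), zero_mul]

lemma theta_inv (hp : ‖p‖ < 1) (hx : x ≠ 0) : theta x⁻¹ p = -x⁻¹ * theta x p := by
  have e1 : theta x⁻¹ p = pochInf x⁻¹ p * pochInf (p * x) p := by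
    unfold theta; rw [show p / x⁻¹ = p * x by field_simp]
  rw [e1, pochInf_peel hp x⁻¹, theta_factor hp x]
  rw [show x⁻¹ * p = p / x by rw [div_eq_mul_inv]; ring, show p * x = x * p by ring]
  field_simp
  ring

lemma theta_shift (hp : ‖p‖ < 1) (hp0 : p ≠ 0) (hx : x ≠ 0) :
    theta (p * x) p = -x⁻¹ * theta x p := by
  have e1 : theta (p * x) p = pochInf (p * x) p * pochInf x⁻¹ p := by
    unfold theta
    rw [show p / (p * x) = x⁻¹ by field_simp]
  rw [e1, pochInf_peel hp x⁻¹, theta_factor hp x]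
  rw [show x⁻¹ * p = p / x by rw [div_eq_mul_inv]; ring, show p * x = x * p by ring]
  field_simp
  ring

lemma theta_pow_zero (hp : ‖p‖ < 1) (hp0 : p ≠ 0) (m : ℤ) : theta (p ^ m) p = 0 := by
  induction m using Int.induction_on with
  | zero => simpa using theta_one
  | succ n ih =>
    have hpn : (p : ℂ) ^ (n : ℤ) ≠ 0 := zpow_ne_zero _ hp0
    have h := theta_shift hp hp0 hpn
    rw [show p * p ^ (n : ℤ) = p ^ ((n : ℤ) + 1) by rw [zpow_add_one₀ hp0]; ring] at h
    rw [h, ih, mul_zero]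
  | pred n ih =>
    have hx : (p : ℂ) ^ (-(n : ℤ) - 1) ≠ 0 := zpow_ne_zero _ hp0
    have h := theta_shift hp hp0 hx
    rw [show p * p ^ (-(n : ℤ) - 1) = p ^ (-(n : ℤ)) by
      rw [show (-(n:ℤ)) = (-(n:ℤ)-1)+1 by ring, zpow_add_one₀ hp0]; ring] at h
    rw [ih] at h
    rcases mul_eq_zero.mp h.symm with h' | h'
    · exact absurd h' (by simp [hx])
    · exact h'

lemma theta_ne_zero (hp : ‖p‖ < 1) (hp0 : p ≠ 0) (hx : x ≠ 0)
    (h : ∀ m : ℤ, x ≠ p ^ m) : theta x p ≠ 0 := by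
  unfold theta
  apply mul_ne_zero
  · apply pochInf_ne_zero hp
    intro k hc
    apply h (-(k : ℤ))
    rw [eq_inv_of_mul_eq_one_left hc, zpow_neg, zpow_natCast]
  · apply pochInf_ne_zero hp
    intro k hc
    apply h ((k : ℤ) + 1)
    have hx' : x = p * p ^ k := by
      field_simp at hc
      linear_combination -hc
    rw [hx', zpow_add_one₀ hp0, zpow_natCast]; ring


lemma pochInf_split (hp : ‖p‖ < 1) (N : ℕ) (x : ℂ) :
    pochInf x p = (∏ k ∈ Finset.range N, (1 - x * p ^ k)) * pochInf (x * p ^ N) p := by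
  induction N with
  | zero => simp
  | succ n ih =>
    rw [ih, Finset.prod_range_succ, pochInf_peel hp (x * p ^ n)]
    rw [show x * p ^ n * p = x * p ^ (n+1) by rw [pow_succ]; ring]
    ring

lemma differentiable_pochInf (hp : ‖p‖ < 1) :
    Differentiable ℂ (fun x => pochInf x p) := by
  intro x₀
  set R : ℝ := ‖x₀‖ + 1 with hR
  obtain ⟨N, hN⟩ := exists_N hp R
  have hRpos : (0:ℝ) < R := by positivity
  have hball : ∀ x ∈ Metric.ball (0:ℂ) R, ∀ k : ℕ, ‖x * p ^ (N + k)‖ ≤ (1/2) * ‖p‖ ^ k := by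
    intro x hx k
    rw [Metric.mem_ball, dist_zero_right] at hx
    rw [norm_mul, norm_pow, pow_add]
    have h1 : ‖x‖ * ‖p‖ ^ N ≤ 1/2 := by
      nlinarith [pow_nonneg (norm_nonneg p) N, norm_nonneg x]
    calc ‖x‖ * (‖p‖ ^ N * ‖p‖ ^ k) = (‖x‖ * ‖p‖ ^ N) * ‖p‖ ^ k := by ring
      _ ≤ (1/2) * ‖p‖ ^ k :=
        mul_le_mul_of_nonneg_right h1 (by positivity)
  have hsmall : ∀ x ∈ Metric.ball (0:ℂ) R, ∀ k : ℕ, ‖x * p ^ (N + k)‖ ≤ 1/2 := by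
    intro x hx k
    calc ‖x * p ^ (N + k)‖ ≤ (1/2) * ‖p‖ ^ k := hball x hx k
      _ ≤ (1/2) * 1 := by
        have := pow_le_one₀ (norm_nonneg p) hp.le (n := k)
        nlinarith
      _ = 1/2 := by ring
  set S : ℂ → ℂ := fun x => ∑' k : ℕ, Complex.log (1 - x * p ^ (N + k)) with hS
  have hSdiff : DifferentiableOn ℂ S (Metric.ball 0 R) := by
    refine TendstoLocallyUniformlyOn.differentiableOn
      (TendstoUniformlyOn.tendstoLocallyUniformlyOn
        (tendstoUniformlyOn_tsum (u := fun k : ℕ => ‖p‖ ^ k)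
          (summable_geometric_of_lt_one (norm_nonneg p) hp) ?_)) ?_ Metric.isOpen_ball
    · intro k x hx
      calc ‖Complex.log (1 - x * p ^ (N + k))‖ ≤ 2 * ‖x * p ^ (N + k)‖ :=
            log_bound (hsmall x hx k)
        _ ≤ ‖p‖ ^ k := by
            have := hball x hx k
            nlinarith
    · filter_upwards with s
      apply DifferentiableOn.fun_sum
      intro i _
      apply DifferentiableOn.clog
      · apply DifferentiableOn.const_sub
        exact (differentiable_id.mul_const _).differentiableOn
      · intro x hx
        have h1 : ‖x * p ^ (N + i)‖ ≤ 1/2 := hsmall x hx i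
        apply Complex.mem_slitPlane_iff.mpr
        left
        have h2 : (1 - x * p ^ (N + i)).re = 1 - (x * p ^ (N + i)).re := by simp
        have h3 : (x * p ^ (N + i)).re ≤ ‖x * p ^ (N + i)‖ := by
          calc (x * p ^ (N + i)).re ≤ |(x * p ^ (N + i)).re| := le_abs_self _
            _ ≤ ‖x * p ^ (N + i)‖ := Complex.abs_re_le_norm _
        rw [h2]; linarith
  have heq : ∀ x ∈ Metric.ball (0:ℂ) R,
      pochInf x p = (∏ k ∈ Finset.range N, (1 - x * p ^ k)) * Complex.exp (S x) := by
    intro x hx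
    rw [pochInf_split hp N x]
    congr 1
    have hnz : ∀ k : ℕ, (x * p ^ N) * p ^ k ≠ 1 := by
      intro k hc
      have h1 := hsmall x hx k
      rw [show x * p ^ (N + k) = x * p ^ N * p ^ k by rw [pow_add]; ring, hc, norm_one] at h1
      linarith
    rw [pochInf_eq_exp hp hnz]
    congr 1
    apply tsum_congr
    intro k
    congr 1
    rw [pow_add]; ring
  have hdiff2 : DifferentiableOn ℂ
      (fun x => (∏ k ∈ Finset.range N, (1 - x * p ^ k)) * Complex.exp (S x))
      (Metric.ball 0 R) := by
    apply DifferentiableOn.mul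
    · apply DifferentiableOn.fun_finset_prod
      intro i _
      apply DifferentiableOn.const_sub
      exact (differentiable_id.mul_const _).differentiableOn
    · exact hSdiff.cexp
  have hx₀ : x₀ ∈ Metric.ball (0:ℂ) R := by
    rw [Metric.mem_ball, dist_zero_right]; simp [hR]
  apply (hdiff2.differentiableAt (Metric.isOpen_ball.mem_nhds hx₀)).congr_of_eventuallyEq
  filter_upwards [Metric.isOpen_ball.mem_nhds hx₀] with z hz
  exact heq z hz

lemma theta_diff (hp : ‖p‖ < 1) :
    DifferentiableOn ℂ (fun x => theta x p) {(0:ℂ)}ᶜ := by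
  unfold theta
  apply DifferentiableOn.mul
  · exact (differentiable_pochInf hp).differentiableOn
  · have h1 : DifferentiableOn ℂ (fun x : ℂ => p / x) {(0:ℂ)}ᶜ := by
      apply DifferentiableOn.div (differentiableOn_const p) differentiableOn_id
      intro x hx
      simpa using hx
    have := (differentiable_pochInf hp).comp_differentiableOn h1
    simpa [Function.comp_def] using this

lemma theta_differentiableAt (hp : ‖p‖ < 1) (hx : x ≠ 0) :
    DifferentiableAt ℂ (fun w => theta w p) x :=
  (theta_diff hp).differentiableAt (isOpen_compl_singleton.mem_nhds (by simpa using hx))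

lemma theta_hasDerivAt (hp : ‖p‖ < 1) (hx : x ≠ 0) :
    HasDerivAt (fun w => theta w p) (deriv (fun w => theta w p) x) x :=
  (theta_differentiableAt hp hx).hasDerivAt

lemma theta_continuousAt (hp : ‖p‖ < 1) (hx : x ≠ 0) :
    ContinuousAt (fun w => theta w p) x :=
  (theta_differentiableAt hp hx).continuousAt


lemma deriv_theta_pow (hp : ‖p‖ < 1) (hp0 : p ≠ 0) (m : ℤ) :
    deriv (fun w => theta w p) (p ^ m) ≠ 0 := by
  induction m using Int.induction_on with
  | zero =>
    rw [zpow_zero]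
    set G : ℂ → ℂ := fun w => pochInf (w * p) p * pochInf (p / w) p with hGdef
    have h1 : DifferentiableAt ℂ (fun w : ℂ => pochInf (w * p) p) 1 := by
      have := DifferentiableAt.comp (x := (1:ℂ))
        ((differentiable_pochInf hp).differentiableAt)
        (differentiableAt_id.mul_const p)
      simpa [Function.comp_def] using this
    have h2 : DifferentiableAt ℂ (fun w : ℂ => pochInf (p / w) p) 1 := by
      have := DifferentiableAt.comp (x := (1:ℂ))
        ((differentiable_pochInf hp).differentiableAt)
        ((differentiableAt_const p).div differentiableAt_id one_ne_zero)
      simpa [Function.comp_def] using this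
    have hG : DifferentiableAt ℂ G 1 := h1.mul h2
    have hpp : pochInf p p ≠ 0 :=
      pochInf_ne_zero hp (small_ne_one hp hp)
    have hG1 : G 1 ≠ 0 := by
      rw [hGdef]
      simp only [one_mul, div_one]
      exact mul_ne_zero hpp hpp
    have hfun : (fun w => theta w p) = fun w => (1 - w) * G w :=
      funext fun w => theta_factor hp w
    rw [hfun]
    have hd1 : HasDerivAt (fun w : ℂ => 1 - w) (-1) 1 := by
      simpa using (hasDerivAt_id (1:ℂ)).const_sub 1
    have hprod := hd1.mul hG.hasDerivAt
    erw [hprod.deriv]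
    have : -1 * G 1 + (1 - 1) * deriv G 1 = -G 1 := by ring
    rw [this]
    exact neg_ne_zero.mpr hG1
  | succ n ih =>
    set a : ℂ := p ^ ((n:ℤ) + 1) with hadef
    have ha : a ≠ 0 := zpow_ne_zero _ hp0
    have ha2 : a / p = p ^ (n:ℤ) := by
      rw [hadef, zpow_add_one₀ hp0]
      field_simp
    have hev : (fun w => theta w p) =ᶠ[𝓝 a] fun w => -(p / w) * theta (w / p) p := by
      filter_upwards [isOpen_compl_singleton.mem_nhds
        (show a ∈ ({(0:ℂ)}ᶜ : Set ℂ) by simpa using ha)] with w hw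
      have hw0 : w ≠ 0 := by simpa using hw
      have h := theta_shift hp hp0 (x := w / p) (div_ne_zero hw0 hp0)
      rw [show p * (w / p) = w by field_simp] at h
      rw [h, inv_div]
    rw [hev.deriv_eq]
    have hd1 : HasDerivAt (fun w : ℂ => -(p / w)) (-p * -(a ^ 2)⁻¹) a := by
      have h' : (fun w : ℂ => -(p / w)) = fun w => -p * w⁻¹ := by
        funext w; ring
      rw [h']
      exact (hasDerivAt_inv ha).const_mul (-p)
    have hd2 : HasDerivAt (fun w : ℂ => theta (w / p) p)
        (deriv (fun w => theta w p) (p ^ (n:ℤ)) * (1 / p)) a := by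
      have houter := theta_hasDerivAt hp (show a / p ≠ 0 by
        rw [ha2]; exact zpow_ne_zero _ hp0)
      have := HasDerivAt.comp a houter ((hasDerivAt_id a).div_const p)
      simpa [Function.comp_def, ha2] using this
    have total := hd1.mul hd2
    erw [total.deriv]
    rw [show theta (a / p) p = 0 by rw [ha2]; exact theta_pow_zero hp hp0 _]
    have hsimp : -p * -(a ^ 2)⁻¹ * 0 +
        -(p / a) * (deriv (fun w => theta w p) (p ^ (n:ℤ)) * (1 / p)) =
        -(deriv (fun w => theta w p) (p ^ (n:ℤ)) / a) := by
      field_simp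
      ring
    rw [hsimp]
    exact neg_ne_zero.mpr (div_ne_zero ih ha)
  | pred n ih =>
    set a : ℂ := p ^ (-(n:ℤ) - 1) with hadef
    have ha : a ≠ 0 := zpow_ne_zero _ hp0
    have ha2 : p * a = p ^ (-(n:ℤ)) := by
      rw [hadef, show (-(n:ℤ)) = (-(n:ℤ) - 1) + 1 by ring, zpow_add_one₀ hp0]
      ring
    have hev : (fun w => theta w p) =ᶠ[𝓝 a] fun w => -w * theta (p * w) p := by
      filter_upwards [isOpen_compl_singleton.mem_nhds
        (show a ∈ ({(0:ℂ)}ᶜ : Set ℂ) by simpa using ha)] with w hw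
      have hw0 : w ≠ 0 := by simpa using hw
      rw [theta_shift hp hp0 hw0]
      field_simp
    rw [hev.deriv_eq]
    have hd1 : HasDerivAt (fun w : ℂ => -w) (-1) a := (hasDerivAt_id a).neg
    have hd2 : HasDerivAt (fun w : ℂ => theta (p * w) p)
        (deriv (fun w => theta w p) (p ^ (-(n:ℤ))) * p) a := by
      have houter := theta_hasDerivAt hp (show p * a ≠ 0 by
        rw [ha2]; exact zpow_ne_zero _ hp0)
      have hinner : HasDerivAt (fun w : ℂ => p * w) p a := by
        simpa using (hasDerivAt_id a).const_mul p
      have := HasDerivAt.comp a houter hinner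
      simpa [Function.comp_def, ha2] using this
    have total := hd1.mul hd2
    erw [total.deriv]
    rw [show theta (p * a) p = 0 by rw [ha2]; exact theta_pow_zero hp hp0 _]
    have hsimp : -1 * 0 + -a * (deriv (fun w => theta w p) (p ^ (-(n:ℤ))) * p) =
        -(a * deriv (fun w => theta w p) (p ^ (-(n:ℤ))) * p) := by ring
    rw [hsimp]
    exact neg_ne_zero.mpr (mul_ne_zero (mul_ne_zero ha ih) hp0)


lemma pow_discrete (hp : ‖p‖ < 1) (hp0 : p ≠ 0) {w : ℂ} (hw : w ≠ 0) :
    ∃ ε > 0, ∀ z : ℂ, dist z w < ε → z ≠ w → ∀ m : ℤ, z ≠ p ^ m := by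
  have hc0 : 0 < ‖p‖ := norm_pos_iff.mpr hp0
  have hlogc : Real.log ‖p‖ < 0 := Real.log_neg hc0 hp
  have hw0 : 0 < ‖w‖ := norm_pos_iff.mpr hw
  set T : Set ℂ := (fun m : ℤ => p ^ m) ''
    (Set.Icc ⌈Real.log (2 * ‖w‖) / Real.log ‖p‖⌉ ⌊Real.log (‖w‖/2) / Real.log ‖p‖⌋) with hTdef
  have hT : T.Finite := Set.Finite.image _ (Set.finite_Icc _ _)
  have hmemT : ∀ z : ℂ, dist z w < ‖w‖/2 → (∃ m : ℤ, z = p ^ m) → z ∈ T := by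
    rintro z hdist ⟨m, rfl⟩
    have hnz : ‖(p:ℂ) ^ m‖ = ‖p‖ ^ m := norm_zpow p m
    have hzw : |‖(p:ℂ) ^ m‖ - ‖w‖| ≤ dist ((p:ℂ) ^ m) w := by
      rw [dist_eq_norm]; exact abs_norm_sub_norm_le _ _
    have habs := abs_le.mp (le_of_lt (lt_of_le_of_lt hzw hdist))
    have h1 : ‖w‖/2 ≤ ‖p‖ ^ m := by rw [← hnz]; linarith [habs.1]
    have h2 : ‖p‖ ^ m ≤ 2 * ‖w‖ := by rw [← hnz]; linarith [habs.2]
    apply Set.mem_image_of_mem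
    rw [Set.mem_Icc]
    constructor
    · rw [Int.ceil_le, div_le_iff_of_neg hlogc]
      have := Real.log_le_log (by positivity) h2
      rwa [Real.log_zpow] at this
    · rw [Int.le_floor, le_div_iff_of_neg hlogc]
      have := Real.log_le_log (by positivity) h1
      rwa [Real.log_zpow] at this
  rcases Set.eq_empty_or_nonempty (T \ {w}) with hF | hF
  · refine ⟨‖w‖/2, by positivity, ?_⟩
    intro z hdist hne m hzm
    have hzT : z ∈ T := hmemT z hdist ⟨m, hzm⟩
    have : z ∈ T \ {w} := ⟨hzT, by simpa using hne⟩
    rw [hF] at this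
    exact this
  · have hwF : w ∉ T \ {w} := fun h => h.2 rfl
    have hclosed : IsClosed (T \ {w}) := (hT.sdiff (t := {w})).isClosed
    have hpos : 0 < infDist w (T \ {w}) :=
      (hclosed.notMem_iff_infDist_pos hF).mp hwF
    refine ⟨min (‖w‖/2) (infDist w (T \ {w})), lt_min (by positivity) hpos, ?_⟩
    intro z hdist hne m hzm
    have hzT : z ∈ T := hmemT z (lt_of_lt_of_le hdist (min_le_left _ _)) ⟨m, hzm⟩
    have hzF : z ∈ T \ {w} := ⟨hzT, by simpa using hne⟩
    have h5 : infDist w (T \ {w}) ≤ dist w z := infDist_le_dist_of_mem hzF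
    rw [dist_comm w z] at h5
    have h6 := lt_of_lt_of_le hdist (min_le_right _ _)
    linarith


lemma key (hp : ‖p‖ < 1) (hp0 : p ≠ 0) {u : ℂ} (hu : u ≠ 0)
    (hu2 : ∀ m : ℤ, u ^ 2 ≠ p ^ m) {f : ℂ → ℂ}
    (hf : DifferentiableOn ℂ f {(0:ℂ)}ᶜ)
    (hfe : ∀ X : ℂ, X ≠ 0 → X ^ 2 * f (p * X) = f X)
    (hfu : f u = 0) (hfu' : f u⁻¹ = 0) :
    ∃ c : ℂ, ∀ X : ℂ, X ≠ 0 → f X = c * (theta (X * u) p * theta (X / u) p) := by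
  set D : ℂ → ℂ := fun X => theta (X * u) p * theta (X / u) p with hDdef
  -- differentiability of D
  have d1 : DifferentiableOn ℂ (fun X : ℂ => theta (X * u) p) {(0:ℂ)}ᶜ := by
    have := (theta_diff hp).comp (s := {(0:ℂ)}ᶜ) ((differentiable_id.mul_const u).differentiableOn)
      (fun X hX => by
        simp only [Set.mem_compl_iff, Set.mem_singleton_iff] at *
        exact mul_ne_zero hX hu)
    simpa [Function.comp_def] using this
  have d2 : DifferentiableOn ℂ (fun X : ℂ => theta (X / u) p) {(0:ℂ)}ᶜ := by
    have := (theta_diff hp).comp (s := {(0:ℂ)}ᶜ) ((differentiable_id.div_const u).differentiableOn)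
      (fun X hX => by
        simp only [Set.mem_compl_iff, Set.mem_singleton_iff] at *
        exact div_ne_zero hX hu)
    simpa [Function.comp_def] using this
  have hDdiff : DifferentiableOn ℂ D {(0:ℂ)}ᶜ := d1.mul d2
  have hDat : ∀ X : ℂ, X ≠ 0 → DifferentiableAt ℂ D X := fun X hX =>
    hDdiff.differentiableAt (isOpen_compl_singleton.mem_nhds (by simpa using hX))
  have hfat : ∀ X : ℂ, X ≠ 0 → DifferentiableAt ℂ f X := fun X hX =>
    hf.differentiableAt (isOpen_compl_singleton.mem_nhds (by simpa using hX))
  -- functional equation for D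
  have hDe : ∀ X : ℂ, X ≠ 0 → X ^ 2 * D (p * X) = D X := by
    intro X hX
    rw [hDdef]
    simp only
    rw [show p * X * u = p * (X * u) by ring, show p * X / u = p * (X / u) by ring]
    rw [theta_shift hp hp0 (mul_ne_zero hX hu), theta_shift hp hp0 (div_ne_zero hX hu)]
    field_simp
  -- zero set
  set Z : Set ℂ := {X : ℂ | ∃ m : ℤ, X = p ^ m * u⁻¹ ∨ X = p ^ m * u} with hZdef
  have hD_ne : ∀ X : ℂ, X ≠ 0 → X ∉ Z → D X ≠ 0 := by
    intro X hX hXZ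
    apply mul_ne_zero
    · apply theta_ne_zero hp hp0 (mul_ne_zero hX hu)
      intro m hm
      exact hXZ ⟨m, Or.inl (by rw [← hm]; field_simp)⟩
    · apply theta_ne_zero hp hp0 (div_ne_zero hX hu)
      intro m hm
      exact hXZ ⟨m, Or.inr (by rw [← hm]; field_simp)⟩
  have hD_zero : ∀ X ∈ Z, D X = 0 := by
    rintro X ⟨m, hm | hm⟩
    · have h1 : X * u = p ^ m := by rw [hm]; field_simp
      rw [hDdef]; simp only
      rw [h1, theta_pow_zero hp hp0, zero_mul]
    · have h1 : X / u = p ^ m := by rw [hm]; field_simp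
      rw [hDdef]; simp only
      rw [h1, theta_pow_zero hp hp0, mul_zero]
  -- f vanishes on orbits
  have hforbit : ∀ w : ℂ, w ≠ 0 → f w = 0 → ∀ m : ℤ, f (p ^ m * w) = 0 := by
    intro w hw h0 m
    induction m using Int.induction_on with
    | zero => simpa using h0
    | succ n ih =>
      have hnz : p ^ (n:ℤ) * w ≠ 0 := mul_ne_zero (zpow_ne_zero _ hp0) hw
      have h := hfe _ hnz
      rw [ih] at h
      rw [show p ^ ((n:ℤ)+1) * w = p * (p ^ (n:ℤ) * w) by rw [zpow_add_one₀ hp0]; ring]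
      rcases mul_eq_zero.mp h with h' | h'
      · exact absurd h' (pow_ne_zero _ hnz)
      · exact h'
    | pred n ih =>
      have hnz : p ^ (-(n:ℤ)-1) * w ≠ 0 := mul_ne_zero (zpow_ne_zero _ hp0) hw
      have h := hfe _ hnz
      rw [show p * (p ^ (-(n:ℤ)-1) * w) = p ^ (-(n:ℤ)) * w by
        rw [show (-(n:ℤ)) = (-(n:ℤ)-1)+1 by ring, zpow_add_one₀ hp0]; ring] at h
      rw [ih, mul_zero] at h
      exact h.symm
  have hf_zero : ∀ X ∈ Z, f X = 0 := by
    rintro X ⟨m, rfl | rfl⟩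
    · exact hforbit u⁻¹ (inv_ne_zero hu) hfu' m
    · exact hforbit u hu hfu m
  -- derivative of D nonzero on Z
  have hD_deriv : ∀ X ∈ Z, deriv D X ≠ 0 := by
    rintro X ⟨m, rfl | rfl⟩
    · have hX0 : (p ^ m * u⁻¹ : ℂ) ≠ 0 := mul_ne_zero (zpow_ne_zero _ hp0) (inv_ne_zero hu)
      have e1 : (p ^ m * u⁻¹) * u = p ^ m := by field_simp
      have h1 : HasDerivAt (fun X : ℂ => theta (X * u) p)
          (deriv (fun w => theta w p) (p ^ m) * u) (p ^ m * u⁻¹) := by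
        have houter := theta_hasDerivAt hp (show (p ^ m * u⁻¹) * u ≠ 0 by
          rw [e1]; exact zpow_ne_zero _ hp0)
        have hinner : HasDerivAt (fun X : ℂ => X * u) u (p ^ m * u⁻¹) := by
          simpa using (hasDerivAt_id (p ^ m * u⁻¹)).mul_const u
        have := HasDerivAt.comp (p ^ m * u⁻¹) houter hinner
        simpa [Function.comp_def, e1] using this
      have h2 : HasDerivAt (fun X : ℂ => theta (X / u) p)
          (deriv (fun w => theta w p) ((p ^ m * u⁻¹) / u) * (1 / u)) (p ^ m * u⁻¹) := by
        have houter := theta_hasDerivAt hp (div_ne_zero hX0 hu)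
        have hinner : HasDerivAt (fun X : ℂ => X / u) (1 / u) (p ^ m * u⁻¹) := by
          simpa using (hasDerivAt_id (p ^ m * u⁻¹)).div_const u
        have := HasDerivAt.comp (p ^ m * u⁻¹) houter hinner
        simpa [Function.comp_def] using this
      have total := h1.mul h2
      rw [hDdef]
      erw [total.deriv]
      rw [e1, theta_pow_zero hp hp0, zero_mul, add_zero]
      apply mul_ne_zero (mul_ne_zero (deriv_theta_pow hp hp0 m) hu)
      apply theta_ne_zero hp hp0 (div_ne_zero hX0 hu)
      intro k hk
      apply hu2 (m - k)
      have hk' : p ^ m = p ^ k * u ^ 2 := by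
        field_simp at hk
        linear_combination hk
      rw [zpow_sub₀ hp0, hk', mul_div_cancel_left₀ _ (zpow_ne_zero k hp0)]
    · have hX0 : (p ^ m * u : ℂ) ≠ 0 := mul_ne_zero (zpow_ne_zero _ hp0) hu
      have e1 : (p ^ m * u) / u = p ^ m := by field_simp
      have h1 : HasDerivAt (fun X : ℂ => theta (X * u) p)
          (deriv (fun w => theta w p) ((p ^ m * u) * u) * u) (p ^ m * u) := by
        have houter := theta_hasDerivAt hp (mul_ne_zero hX0 hu)
        have hinner : HasDerivAt (fun X : ℂ => X * u) u (p ^ m * u) := by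
          simpa using (hasDerivAt_id (p ^ m * u)).mul_const u
        have := HasDerivAt.comp (p ^ m * u) houter hinner
        simpa [Function.comp_def] using this
      have h2 : HasDerivAt (fun X : ℂ => theta (X / u) p)
          (deriv (fun w => theta w p) (p ^ m) * (1 / u)) (p ^ m * u) := by
        have houter := theta_hasDerivAt hp (show (p ^ m * u) / u ≠ 0 by
          rw [e1]; exact zpow_ne_zero _ hp0)
        have hinner : HasDerivAt (fun X : ℂ => X / u) (1 / u) (p ^ m * u) := by
          simpa using (hasDerivAt_id (p ^ m * u)).div_const u
        have := HasDerivAt.comp (p ^ m * u) houter hinner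
        simpa [Function.comp_def, e1] using this
      have total := h1.mul h2
      rw [hDdef]
      erw [total.deriv]
      rw [e1, theta_pow_zero hp hp0, mul_zero, zero_add]
      apply mul_ne_zero _ (mul_ne_zero (deriv_theta_pow hp hp0 m) (one_div_ne_zero hu))
      apply theta_ne_zero hp hp0 (mul_ne_zero hX0 hu)
      intro k hk
      apply hu2 (k - m)
      have hk' : p ^ k = p ^ m * u ^ 2 := by
        rw [← hk]; ring
      rw [zpow_sub₀ hp0, hk', mul_div_cancel_left₀ _ (zpow_ne_zero m hp0)]
  -- discreteness of Z
  have hZdisc : ∀ X₀ : ℂ, X₀ ≠ 0 →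
      ∃ ε > 0, ∀ X ∈ Metric.ball X₀ ε, X ≠ X₀ → X ∉ Z ∧ X ≠ 0 := by
    intro X₀ hX₀
    obtain ⟨ε₁, hε₁, h₁⟩ := pow_discrete hp hp0 (mul_ne_zero hX₀ hu)
    obtain ⟨ε₂, hε₂, h₂⟩ := pow_discrete hp hp0 (div_ne_zero hX₀ hu)
    have hu0 : (0:ℝ) < ‖u‖ := norm_pos_iff.mpr hu
    refine ⟨min (min (ε₁ / ‖u‖) (ε₂ * ‖u‖)) ‖X₀‖, lt_min (lt_min (by positivity) (by positivity)) (norm_pos_iff.mpr hX₀), ?_⟩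
    intro X hX hXne
    have hXd := Metric.mem_ball.mp hX
    constructor
    · rintro ⟨m, hm | hm⟩
      · have hdist : dist (X * u) (X₀ * u) < ε₁ := by
          rw [dist_eq_norm, show X * u - X₀ * u = (X - X₀) * u by ring, norm_mul,
            ← dist_eq_norm]
          have hXd1 : dist X X₀ < ε₁ / ‖u‖ :=
            lt_of_lt_of_le hXd (le_trans (min_le_left _ _) (min_le_left _ _))
          calc dist X X₀ * ‖u‖ < (ε₁ / ‖u‖) * ‖u‖ :=
                mul_lt_mul_of_pos_right hXd1 hu0
            _ = ε₁ := div_mul_cancel₀ ε₁ hu0.ne'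
        exact h₁ (X * u) hdist (fun hc => hXne (mul_right_cancel₀ hu hc)) m
          (by rw [hm]; field_simp)
      · have hdist : dist (X / u) (X₀ / u) < ε₂ := by
          rw [dist_eq_norm, show X / u - X₀ / u = (X - X₀) / u by ring, norm_div,
            ← dist_eq_norm]
          have hXd1 : dist X X₀ < ε₂ * ‖u‖ :=
            lt_of_lt_of_le hXd (le_trans (min_le_left _ _) (min_le_right _ _))
          rw [div_lt_iff₀ hu0]
          exact hXd1
        refine h₂ (X / u) hdist (fun hc => hXne ?_) m (by rw [hm]; field_simp)
        field_simp at hc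
        exact hc
    · intro h0
      rw [h0] at hXd
      have := lt_of_lt_of_le hXd (min_le_right _ _)
      rw [dist_comm, dist_zero_right] at this
      exact lt_irrefl _ this
  -- the quotient function
  set G : ℂ → ℂ := fun X => if D X = 0 then deriv f X / deriv D X else f X / D X
    with hGdef
  have hGval : ∀ X : ℂ, D X ≠ 0 → G X = f X / D X := by
    intro X h; rw [hGdef]; simp only [if_neg h]
  have hGval0 : ∀ X : ℂ, D X = 0 → G X = deriv f X / deriv D X := by
    intro X h; rw [hGdef]; simp only [if_pos h]
  -- G is differentiable on ℂ*
  have hG : DifferentiableOn ℂ G {(0:ℂ)}ᶜ := by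
    intro X₀ hX₀mem
    have hX₀ : X₀ ≠ 0 := by simpa using hX₀mem
    apply DifferentiableAt.differentiableWithinAt
    by_cases hD0 : D X₀ = 0
    · have hXZ : X₀ ∈ Z := by
        by_contra hc
        exact (hD_ne X₀ hX₀ hc) hD0
      obtain ⟨ε, hε, hball⟩ := hZdisc X₀ hX₀
      have hBn : Metric.ball X₀ ε ∈ 𝓝 X₀ := Metric.ball_mem_nhds X₀ hε
      have hBsub : Metric.ball X₀ ε ⊆ {(0:ℂ)}ᶜ := by
        intro z hz
        rcases eq_or_ne z X₀ with rfl | hne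
        · simpa using hX₀
        · simpa using (hball z hz hne).2
      have hnum : DifferentiableOn ℂ (dslope f X₀) (Metric.ball X₀ ε) :=
        (Complex.differentiableOn_dslope hBn).mpr (hf.mono hBsub)
      have hden : DifferentiableOn ℂ (dslope D X₀) (Metric.ball X₀ ε) :=
        (Complex.differentiableOn_dslope hBn).mpr (hDdiff.mono hBsub)
      have hdenne : ∀ z ∈ Metric.ball X₀ ε, dslope D X₀ z ≠ 0 := by
        intro z hz
        rcases eq_or_ne z X₀ with rfl | hne
        · rw [dslope_same]; exact hD_deriv _ hXZ
        · rw [dslope_of_ne D hne, slope_def_field, hD0, sub_zero]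
          have hDz : D z ≠ 0 := hD_ne z (hball z hz hne).2 (hball z hz hne).1
          exact div_ne_zero hDz (sub_ne_zero.mpr hne)
      have hq : DifferentiableOn ℂ (fun z => dslope f X₀ z / dslope D X₀ z)
          (Metric.ball X₀ ε) := hnum.div hden hdenne
      apply (hq.differentiableAt hBn).congr_of_eventuallyEq
      filter_upwards [hBn] with z hz
      rcases eq_or_ne z X₀ with rfl | hne
      · rw [hGval0 z hD0, dslope_same, dslope_same]
      · have hz2 := hball z hz hne
        have hDz : D z ≠ 0 := hD_ne z hz2.2 hz2.1
        rw [hGval z hDz, dslope_of_ne f hne, dslope_of_ne D hne, slope_def_field,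
          slope_def_field, hD0, hf_zero X₀ hXZ, sub_zero, sub_zero]
        rw [div_div_div_cancel_right₀]
        exact sub_ne_zero.mpr hne
    · have hopen : IsOpen {X : ℂ | X ≠ 0 ∧ D X ≠ 0} := by
        have hset : {X : ℂ | X ≠ 0 ∧ D X ≠ 0} = {(0:ℂ)}ᶜ ∩ D ⁻¹' {(0:ℂ)}ᶜ := by
          ext z
          simp [Set.mem_compl_iff, Set.mem_singleton_iff]
        rw [hset]
        exact (hDdiff.continuousOn).isOpen_inter_preimage isOpen_compl_singleton
          isOpen_compl_singleton
      have hfd : DifferentiableAt ℂ (fun X => f X / D X) X₀ :=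
        (hfat X₀ hX₀).div (hDat X₀ hX₀) hD0
      apply hfd.congr_of_eventuallyEq
      filter_upwards [hopen.mem_nhds ⟨hX₀, hD0⟩] with z hz
      exact hGval z hz.2
  have hGat : ∀ X : ℂ, X ≠ 0 → ContinuousAt G X := fun X hX =>
    (hG.differentiableAt (isOpen_compl_singleton.mem_nhds (by simpa using hX))).continuousAt
  -- invariance of G
  have hGp_good : ∀ X : ℂ, X ≠ 0 → D X ≠ 0 → G (p * X) = G X := by
    intro X hX hD0
    have hDp : D (p * X) ≠ 0 := by
      intro hc; apply hD0; rw [← hDe X hX, hc, mul_zero]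
    rw [hGval _ hDp, hGval _ hD0]
    rw [div_eq_div_iff hDp hD0]
    linear_combination D (p * X) * (hfe X hX) - f (p * X) * (hDe X hX)
  have hGp : ∀ X : ℂ, X ≠ 0 → G (p * X) = G X := by
    intro X hX
    by_cases hD0 : D X = 0
    · obtain ⟨ε, hε, hball⟩ := hZdisc X hX
      have hevgood : ∀ᶠ z in 𝓝[≠] X, G (p * z) = G z := by
        filter_upwards [mem_nhdsWithin_of_mem_nhds (Metric.ball_mem_nhds X hε),
          self_mem_nhdsWithin] with z hz1 hz2
        have hzX : z ≠ X := hz2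
        have h := hball z hz1 hzX
        exact hGp_good z h.2 (hD_ne z h.2 h.1)
      have T1 : Tendsto G (𝓝[≠] X) (𝓝 (G X)) :=
        ((hGat X hX).tendsto).mono_left nhdsWithin_le_nhds
      have T2 : Tendsto (fun z => G (p * z)) (𝓝[≠] X) (𝓝 (G (p * X))) := by
        have hc : ContinuousAt (fun z => G (p * z)) X := by
          have := (hGat (p * X) (mul_ne_zero hp0 hX)).comp
            ((continuous_const.mul continuous_id).continuousAt (x := X))
          simpa [Function.comp_def] using this
        exact hc.tendsto.mono_left nhdsWithin_le_nhds
      exact tendsto_nhds_unique (T2.congr' hevgood) T1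
    · exact hGp_good X hX hD0
  -- orbit invariance
  have hGorbit : ∀ X : ℂ, X ≠ 0 → ∀ n : ℤ, G (p ^ n * X) = G X := by
    intro X hX n
    induction n using Int.induction_on with
    | zero => rw [zpow_zero, one_mul]
    | succ k ih =>
      rw [show p ^ ((k:ℤ)+1) * X = p * (p ^ (k:ℤ) * X) by rw [zpow_add_one₀ hp0]; ring,
        hGp _ (mul_ne_zero (zpow_ne_zero _ hp0) hX), ih]
    | pred k ih =>
      have h := hGp (p ^ (-(k:ℤ)-1) * X) (mul_ne_zero (zpow_ne_zero _ hp0) hX)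
      rw [show p * (p ^ (-(k:ℤ)-1) * X) = p ^ (-(k:ℤ)) * X by
        rw [show (-(k:ℤ)) = (-(k:ℤ)-1)+1 by ring, zpow_add_one₀ hp0]; ring, ih] at h
      exact h.symm
  -- boundedness
  set A : Set ℂ := Metric.closedBall 0 1 \ Metric.ball 0 ‖p‖ with hAdef
  have hA0 : A ⊆ {(0:ℂ)}ᶜ := by
    intro z hz
    simp only [Set.mem_compl_iff, Set.mem_singleton_iff]
    intro h0
    apply hz.2
    rw [h0, Metric.mem_ball, dist_self]
    exact norm_pos_iff.mpr hp0
  have hAcomp : IsCompact A := (isCompact_closedBall _ _).diff Metric.isOpen_ball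
  obtain ⟨M, hM⟩ := hAcomp.exists_bound_of_continuousOn ((hG.continuousOn).mono hA0)
  have hMa : ∀ X : ℂ, X ≠ 0 → ‖G X‖ ≤ M := by
    intro X hX
    have hx0 : (0:ℝ) < ‖X‖ := norm_pos_iff.mpr hX
    have hppos : (0:ℝ) < ‖p‖ := norm_pos_iff.mpr hp0
    have hip : 1 < ‖p‖⁻¹ := (one_lt_inv₀ hppos).mpr hp
    obtain ⟨n, hn⟩ := exists_mem_Ioc_zpow hx0 hip
    have hnorm : ‖p ^ (n+1) * X‖ = ‖p‖ ^ (n+1) * ‖X‖ := by rw [norm_mul, norm_zpow]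
    have hzp : (0:ℝ) < ‖p‖ ^ (n+1) := zpow_pos hppos _
    have hmem : p ^ (n+1) * X ∈ A := by
      constructor
      · rw [Metric.mem_closedBall, dist_zero_right, hnorm]
        calc ‖p‖ ^ (n+1) * ‖X‖ ≤ ‖p‖ ^ (n+1) * (‖p‖⁻¹) ^ (n+1) :=
              mul_le_mul_of_nonneg_left hn.2 hzp.le
          _ = 1 := by rw [← mul_zpow, mul_inv_cancel₀ hppos.ne', one_zpow]
      · rw [Metric.mem_ball, dist_zero_right, hnorm]
        push_neg
        have h2 : ‖p‖ ^ (n+1) * (‖p‖⁻¹) ^ n < ‖p‖ ^ (n+1) * ‖X‖ :=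
          mul_lt_mul_of_pos_left hn.1 hzp
        have h3 : ‖p‖ ^ (n+1) * (‖p‖⁻¹) ^ n = ‖p‖ := by
          rw [inv_zpow, ← zpow_neg, ← zpow_add₀ hppos.ne']
          norm_num
        linarith
    calc ‖G X‖ = ‖G (p ^ (n+1) * X)‖ := by rw [hGorbit X hX (n+1)]
      _ ≤ M := hM _ hmem
  -- removable singularity at 0 and Liouville
  have hball : DifferentiableOn ℂ G (Metric.ball 0 1 \ {0}) :=
    hG.mono (by intro z hz; simpa using hz.2)
  have hbdd : BddAbove (norm ∘ G '' (Metric.ball 0 1 \ {0})) := by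
    refine ⟨M, ?_⟩
    rintro r ⟨z, hz, rfl⟩
    exact hMa z (by simpa using hz.2)
  have hupd := Complex.differentiableOn_update_limUnder_of_bddAbove
    (Metric.ball_mem_nhds (0:ℂ) one_pos) hball hbdd
  set H := Function.update G 0 (limUnder (𝓝[≠] (0:ℂ)) G) with hH
  have hHdiff : Differentiable ℂ H := by
    intro z
    by_cases hz : z ∈ Metric.ball (0:ℂ) 1
    · exact hupd.differentiableAt (Metric.isOpen_ball.mem_nhds hz)
    · have hz0 : z ≠ 0 := by
        intro h; apply hz; rw [h]; exact Metric.mem_ball_self one_pos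
      have h1 : DifferentiableAt ℂ G z :=
        hG.differentiableAt (isOpen_compl_singleton.mem_nhds (by simpa using hz0))
      apply h1.congr_of_eventuallyEq
      filter_upwards [isOpen_compl_singleton.mem_nhds
        (show z ∈ ({(0:ℂ)}ᶜ : Set ℂ) by simpa using hz0)] with w hw
      exact Function.update_of_ne (by simpa using hw) _ _
  have hHb : ∀ z, ‖H z‖ ≤ max M ‖H 0‖ := by
    intro z
    rcases eq_or_ne z 0 with rfl | hz
    · exact le_max_right _ _
    · rw [hH, Function.update_of_ne hz]
      exact le_trans (hMa z hz) (le_max_left _ _)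
  have hbound : Bornology.IsBounded (Set.range H) :=
    isBounded_iff_forall_norm_le.mpr ⟨max M ‖H 0‖, by
      rintro y ⟨z, rfl⟩; exact hHb z⟩
  have hconst := hHdiff.apply_eq_apply_of_bounded hbound
  refine ⟨G 1, ?_⟩
  intro X hX
  have hGX : G X = G 1 := by
    have e1 : H X = G X := Function.update_of_ne hX _ _
    have e2 : H 1 = G 1 := Function.update_of_ne one_ne_zero _ _
    rw [← e1, ← e2, hconst X 1]
  by_cases hD0 : D X = 0
  · have hXZ : X ∈ Z := by
      by_contra hc
      exact (hD_ne X hX hc) hD0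
    show f X = G 1 * D X
    rw [hf_zero X hXZ, hD0, mul_zero]
  · have h1 := hGval X hD0
    rw [h1] at hGX
    rw [div_eq_iff hD0] at hGX
    show f X = G 1 * D X
    exact hGX


lemma main_good (x y u v : ℂ) (hx : x ≠ 0) (hy : y ≠ 0) (hu : u ≠ 0) (hv : v ≠ 0)
    (hp0 : p ≠ 0) (hp : ‖p‖ < 1)
    (g1 : ∀ m : ℤ, u ^ 2 ≠ p ^ m) (g2 : ∀ m : ℤ, y * u ≠ p ^ m)
    (g3 : ∀ m : ℤ, y / u ≠ p ^ m) :
    theta (x * y) p * theta (x / y) p * theta (u * v) p * theta (u / v) p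
      - theta (x * v) p * theta (x / v) p * theta (u * y) p * theta (u / y) p
    = (u / y) * (theta (y * v) p * theta (y / v) p * theta (x * u) p * theta (x / u) p) := by
  set F : ℂ → ℂ := fun X =>
    theta (X * y) p * theta (X / y) p * (theta (u * v) p * theta (u / v) p)
    - theta (X * v) p * theta (X / v) p * (theta (u * y) p * theta (u / y) p)
    - u / y * (theta (y * v) p * theta (y / v) p * (theta (X * u) p * theta (X / u) p))
    with hFdef
  have hth1 : ∀ a : ℂ, a ≠ 0 → DifferentiableOn ℂ (fun X : ℂ => theta (X * a) p) {(0:ℂ)}ᶜ := by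
    intro a ha
    have := (theta_diff hp).comp (s := {(0:ℂ)}ᶜ) ((differentiable_id.mul_const a).differentiableOn)
      (fun X hX => by
        simp only [Set.mem_compl_iff, Set.mem_singleton_iff] at *
        exact mul_ne_zero hX ha)
    simpa [Function.comp_def] using this
  have hth2 : ∀ a : ℂ, a ≠ 0 → DifferentiableOn ℂ (fun X : ℂ => theta (X / a) p) {(0:ℂ)}ᶜ := by
    intro a ha
    have := (theta_diff hp).comp (s := {(0:ℂ)}ᶜ) ((differentiable_id.div_const a).differentiableOn)
      (fun X hX => by
        simp only [Set.mem_compl_iff, Set.mem_singleton_iff] at *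
        exact div_ne_zero hX ha)
    simpa [Function.comp_def] using this
  have hFdiff : DifferentiableOn ℂ F {(0:ℂ)}ᶜ := by
    rw [hFdef]
    apply DifferentiableOn.sub
    apply DifferentiableOn.sub
    · exact ((hth1 y hy).mul (hth2 y hy)).mul (differentiableOn_const _)
    · exact ((hth1 v hv).mul (hth2 v hv)).mul (differentiableOn_const _)
    · exact (differentiableOn_const _).mul
        ((differentiableOn_const _).mul ((hth1 u hu).mul (hth2 u hu)))
  have hfe : ∀ X : ℂ, X ≠ 0 → X ^ 2 * F (p * X) = F X := by
    intro X hX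
    rw [hFdef]
    simp only
    rw [show p * X * y = p * (X * y) by ring, show p * X / y = p * (X / y) by ring,
      show p * X * v = p * (X * v) by ring, show p * X / v = p * (X / v) by ring,
      show p * X * u = p * (X * u) by ring, show p * X / u = p * (X / u) by ring]
    rw [theta_shift hp hp0 (mul_ne_zero hX hy), theta_shift hp hp0 (div_ne_zero hX hy),
      theta_shift hp hp0 (mul_ne_zero hX hv), theta_shift hp hp0 (div_ne_zero hX hv),
      theta_shift hp hp0 (mul_ne_zero hX hu), theta_shift hp hp0 (div_ne_zero hX hu)]
    have e1 : (X*y)⁻¹ * (X/y)⁻¹ = X⁻¹^2 := by field_simp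
    have e2 : (X*v)⁻¹ * (X/v)⁻¹ = X⁻¹^2 := by field_simp
    have e3 : (X*u)⁻¹ * (X/u)⁻¹ = X⁻¹^2 := by field_simp
    have e4 : X^2 * X⁻¹^2 = 1 := by field_simp
    linear_combination (theta (X*y) p * theta (X/y) p * (theta (u*v) p * theta (u/v) p)
        - theta (X*v) p * theta (X/v) p * (theta (u*y) p * theta (u/y) p)
        - u / y * (theta (y*v) p * theta (y/v) p * (theta (X*u) p * theta (X/u) p))) * e4
      + X^2 * (theta (X*y) p * theta (X/y) p * (theta (u*v) p * theta (u/v) p)) * e1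
      - X^2 * (theta (X*v) p * theta (X/v) p * (theta (u*y) p * theta (u/y) p)) * e2
      - X^2 * (u/y * (theta (y*v) p * theta (y/v) p * (theta (X*u) p * theta (X/u) p))) * e3
  have hFu : F u = 0 := by
    rw [hFdef]
    simp only
    rw [div_self hu, theta_one]
    ring
  have hFu' : F u⁻¹ = 0 := by
    rw [hFdef]
    simp only
    rw [show u⁻¹ * y = (u / y)⁻¹ by rw [inv_div]; ring,
      show u⁻¹ / y = (u * y)⁻¹ by rw [mul_inv]; ring,
      show u⁻¹ * v = (u / v)⁻¹ by rw [inv_div]; ring,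
      show u⁻¹ / v = (u * v)⁻¹ by rw [mul_inv]; ring,
      inv_mul_cancel₀ hu, theta_one]
    rw [theta_inv hp (div_ne_zero hu hy), theta_inv hp (mul_ne_zero hu hy),
      theta_inv hp (div_ne_zero hu hv), theta_inv hp (mul_ne_zero hu hv)]
    field_simp [hu, hy, hv]
    ring
  have hFy : F y = 0 := by
    rw [hFdef]
    simp only
    rw [div_self hy, theta_one]
    rw [show y / u = (u / y)⁻¹ by rw [inv_div],
      theta_inv hp (div_ne_zero hu hy),
      show y * u = u * y from mul_comm y u]
    field_simp [hu, hy]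
    ring
  obtain ⟨c, hc⟩ := key hp hp0 hu g1 hFdiff hfe hFu hFu'
  have hDy : theta (y * u) p * theta (y / u) p ≠ 0 :=
    mul_ne_zero (theta_ne_zero hp hp0 (mul_ne_zero hy hu) g2)
      (theta_ne_zero hp hp0 (div_ne_zero hy hu) g3)
  have hc0 : c = 0 := by
    have h1 := hc y hy
    rw [hFy] at h1
    rcases mul_eq_zero.mp h1.symm with h | h
    · exact h
    · exact absurd h hDy
  have hFx := hc x hx
  rw [hc0, zero_mul] at hFx
  rw [hFdef] at hFx
  simp only at hFx
  linear_combination hFx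

lemma theta_zero_base (w : ℂ) : theta w 0 = 1 - w := by
  unfold theta pochInf
  have h1 : ∏' k : ℕ, (1 - w * (0:ℂ) ^ k) = 1 - w := by
    rw [tprod_eq_mulSingle 0]
    · simp
    · intro b hb
      simp [zero_pow hb]
  have h2 : ∏' k : ℕ, (1 - (0:ℂ) / w * (0:ℂ) ^ k) = 1 := by
    simp
  rw [h1, h2, mul_one]

theorem riemann_addition_formula' (x y u v p : ℂ) (hx : x ≠ 0) (hy : y ≠ 0)
    (hu : u ≠ 0) (hv : v ≠ 0) (hp : ‖p‖ < 1) :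
    theta (x * y) p * theta (x / y) p * theta (u * v) p * theta (u / v) p
      - theta (x * v) p * theta (x / v) p * theta (u * y) p * theta (u / y) p
    = (u / y) * (theta (y * v) p * theta (y / v) p * theta (x * u) p * theta (x / u) p) := by
  have hpn : ‖p‖ < 1 := hp
  rcases eq_or_ne p 0 with rfl | hp0
  · simp only [theta_zero_base]
    field_simp
    ring
  · -- perturbation in u
    set Ok : ℂ → Prop := fun w => (∀ m : ℤ, w ^ 2 ≠ p ^ m) ∧ (∀ m : ℤ, y * w ≠ p ^ m)
      ∧ (∀ m : ℤ, y / w ≠ p ^ m) with hOk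
    have hBad : Set.Countable {t : ℝ | 0 < t ∧ ¬ Ok ((t:ℂ) * u)} := by
      have hsub : {t : ℝ | 0 < t ∧ ¬ Ok ((t:ℂ) * u)} ⊆
          ⋃ m : ℤ, ({t : ℝ | 0 < t ∧ ((t:ℂ) * u) ^ 2 = p ^ m}
            ∪ {t : ℝ | 0 < t ∧ y * ((t:ℂ) * u) = p ^ m}
            ∪ {t : ℝ | 0 < t ∧ y / ((t:ℂ) * u) = p ^ m}) := by
        intro s hs
        obtain ⟨hs0, hnot⟩ := hs
        rw [hOk] at hnot
        simp only [not_and_or, not_forall, not_not] at hnot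
        rw [Set.mem_iUnion]
        rcases hnot with ⟨m, hm⟩ | ⟨m, hm⟩ | ⟨m, hm⟩
        · exact ⟨m, Or.inl (Or.inl ⟨hs0, hm⟩)⟩
        · exact ⟨m, Or.inl (Or.inr ⟨hs0, hm⟩)⟩
        · exact ⟨m, Or.inr ⟨hs0, hm⟩⟩
      apply Set.Countable.mono hsub
      apply Set.countable_iUnion
      intro m
      apply Set.Countable.union
      · apply Set.Countable.union
        · apply Set.Subsingleton.countable
          intro t1 h1 t2 h2
          have h3 : ((t1:ℂ) * u) ^ 2 = ((t2:ℂ) * u) ^ 2 := h1.2.trans h2.2.symm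
          rw [mul_pow, mul_pow] at h3
          have h4 : ((t1:ℂ)) ^ 2 = ((t2:ℂ)) ^ 2 :=
            mul_right_cancel₀ (pow_ne_zero 2 hu) h3
          have h5 : (t1:ℝ) ^ 2 = (t2:ℝ) ^ 2 := by exact_mod_cast h4
          rcases sq_eq_sq_iff_eq_or_eq_neg.mp h5 with h | h
          · exact h
          · linarith [h1.1, h2.1]
        · apply Set.Subsingleton.countable
          intro t1 h1 t2 h2
          have h3 : y * ((t1:ℂ) * u) = y * ((t2:ℂ) * u) := h1.2.trans h2.2.symm
          have h4 : (t1:ℂ) = (t2:ℂ) := by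
            have h5 : (t1:ℂ) * (y * u) = (t2:ℂ) * (y * u) := by linear_combination h3
            exact mul_right_cancel₀ (mul_ne_zero hy hu) h5
          exact_mod_cast h4
      · apply Set.Subsingleton.countable
        intro t1 h1 t2 h2
        have ht1 : (t1:ℂ) ≠ 0 := Complex.ofReal_ne_zero.mpr (ne_of_gt h1.1)
        have ht2 : (t2:ℂ) ≠ 0 := Complex.ofReal_ne_zero.mpr (ne_of_gt h2.1)
        have h3 : y / ((t1:ℂ) * u) = y / ((t2:ℂ) * u) := h1.2.trans h2.2.symm
        have h4 : (t1:ℂ) = (t2:ℂ) := by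
          rw [div_eq_div_iff (mul_ne_zero ht1 hu) (mul_ne_zero ht2 hu)] at h3
          have h5 : (t2:ℂ) * (y * u) = (t1:ℂ) * (y * u) := by linear_combination h3
          exact (mul_right_cancel₀ (mul_ne_zero hy hu) h5).symm
        exact_mod_cast h4
    have hdense : Dense {t : ℝ | 0 < t ∧ ¬ Ok ((t:ℂ) * u)}ᶜ := hBad.dense_compl ℝ
    have hseq : ∀ n : ℕ, ∃ s : ℝ, s ∈ Set.Ioo (1:ℝ) (1 + 1/(n+1)) ∧ Ok ((s:ℂ) * u) := by
      intro n
      have hne : (Set.Ioo (1:ℝ) (1 + 1/(n+1))).Nonempty := by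
        apply Set.nonempty_Ioo.mpr
        have : (0:ℝ) < 1/(n+1) := by positivity
        linarith
      obtain ⟨s, hsc, hso⟩ := hdense.exists_mem_open isOpen_Ioo hne
      refine ⟨s, hso, ?_⟩
      by_contra hbad
      exact hsc ⟨by linarith [hso.1], hbad⟩
    choose t ht hOkt using hseq
    have htend : Tendsto (fun n : ℕ => t n) atTop (𝓝 1) := by
      have hup : Tendsto (fun n : ℕ => 1 + 1/((n:ℝ)+1)) atTop (𝓝 1) := by
        have := tendsto_one_div_add_atTop_nhds_zero_nat (𝕜 := ℝ)
        have h2 := this.const_add (1:ℝ)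
        simpa using h2
      exact tendsto_of_tendsto_of_tendsto_of_le_of_le tendsto_const_nhds hup
        (fun n => (ht n).1.le) (fun n => (ht n).2.le)
    have hutend : Tendsto (fun n : ℕ => ((t n : ℝ) : ℂ) * u) atTop (𝓝 u) := by
      have h1 : Tendsto (fun n => ((t n : ℝ) : ℂ)) atTop (𝓝 (1:ℂ)) := by
        have := (Complex.continuous_ofReal.continuousAt (x := (1:ℝ))).tendsto.comp htend
        simpa [Function.comp_def] using this
      have := h1.mul_const u
      simpa using this
    set L : ℂ → ℂ := fun w => theta (x*y) p * theta (x/y) p * theta (w*v) p * theta (w/v) p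
      - theta (x*v) p * theta (x/v) p * theta (w*y) p * theta (w/y) p with hL
    set R : ℂ → ℂ := fun w => (w/y) * (theta (y*v) p * theta (y/v) p * theta (x*w) p * theta (x/w) p)
      with hR
    have hthc : ∀ g : ℂ → ℂ, ContinuousAt g u → g u ≠ 0 →
        ContinuousAt (fun w => theta (g w) p) u := by
      intro g hg hgu
      have := (theta_continuousAt hpn hgu).comp hg
      simpa [Function.comp_def] using this
    have hLc : ContinuousAt L u := by
      rw [hL]
      apply ContinuousAt.sub
      · exact ((continuousAt_const.mul continuousAt_const).mul
          (hthc _ (continuousAt_id.mul continuousAt_const) (mul_ne_zero hu hv))).mul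
          (hthc _ (continuousAt_id.div continuousAt_const hv) (div_ne_zero hu hv))
      · exact ((continuousAt_const.mul continuousAt_const).mul
          (hthc _ (continuousAt_id.mul continuousAt_const) (mul_ne_zero hu hy))).mul
          (hthc _ (continuousAt_id.div continuousAt_const hy) (div_ne_zero hu hy))
    have hRc : ContinuousAt R u := by
      rw [hR]
      apply ContinuousAt.mul
      · exact continuousAt_id.div continuousAt_const hy
      · exact ((continuousAt_const.mul continuousAt_const).mul
          (hthc _ (continuousAt_const.mul continuousAt_id) (mul_ne_zero hx hu))).mul
          (hthc _ (continuousAt_const.div continuousAt_id hu) (div_ne_zero hx hu))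
    have hids : ∀ n : ℕ, L (((t n : ℝ) : ℂ) * u) = R (((t n : ℝ) : ℂ) * u) := by
      intro n
      have htn0 : ((t n : ℝ) : ℂ) * u ≠ 0 :=
        mul_ne_zero (Complex.ofReal_ne_zero.mpr (by linarith [(ht n).1])) hu
      obtain ⟨g1, g2, g3⟩ := hOkt n
      have := main_good x y (((t n : ℝ) : ℂ) * u) v hx hy htn0 hv hp0 hpn g1 g2 g3
      rw [hL, hR]
      simp only
      linear_combination this
    have hLt : Tendsto (fun n => L (((t n : ℝ) : ℂ) * u)) atTop (𝓝 (L u)) :=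
      (hLc.tendsto).comp hutend
    have hRt : Tendsto (fun n => L (((t n : ℝ) : ℂ) * u)) atTop (𝓝 (R u)) := by
      have := (hRc.tendsto).comp hutend
      exact Tendsto.congr (fun n => (hids n).symm) this
    have hLR : L u = R u := tendsto_nhds_unique hLt hRt
    rw [hL, hR] at hLR
    simp only at hLR
    linear_combination hLR

end RTA

theorem riemann_addition_formula (x y u v p : ℂ) (hx : x ≠ 0) (hy : y ≠ 0)
    (hu : u ≠ 0) (hv : v ≠ 0) (hp : ‖p‖ < 1) :
    theta (x * y) p * theta (x / y) p * theta (u * v) p * theta (u / v) p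
      - theta (x * v) p * theta (x / v) p * theta (u * y) p * theta (u / y) p
    = (u / y) * (theta (y * v) p * theta (y / v) p * theta (x * u) p * theta (x / u) p) :=
  RTA.riemann_addition_formula' x y u v p hx hy hu hv hp
end

section
/- (q-Pfaff–Saalschütz via the degenerate weight) Define w₀(n,m) = [(1-bq^{2n})(1-bq^{2n-1})/((1-bq^{2n+m})(1-bq^{2n+m-1}))]·q^m for nonzero complex b, q. Then the generating function of lattice paths from (0,0) to (n,m) with positive unit steps, weighting each horizontal step (i-1,j)→(i,j) by w₀(i,j), equals (q^{1+n},bq^{1+n};q)_m / ((q,bq^{1+2n};q)_m), for all nonnegative integers n, m, assuming all denominators are nonzero. -/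
open Finset

noncomputable def qpoch (a q : ℂ) (n : ℕ) : ℂ := ∏ j ∈ Finset.range n, (1 - a * q ^ j)

noncomputable def GF (wt : ℤ → ℤ → ℂ) (l k : ℤ) : ℕ → ℕ → ℂ
  | 0, 0 => 1
  | 0, _ + 1 => 1
  | i + 1, 0 => GF wt l k i 0 * wt (l + i + 1) k
  | i + 1, j + 1 => GF wt l k (i + 1) j + GF wt l k i (j + 1) * wt (l + i + 1) (k + j + 1)
termination_by i j => (i, j)

lemma poch_succ (a q : ℂ) (m : ℕ) : qpoch a q (m+1) = qpoch a q m * (1 - a * q ^ m) :=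
  Finset.prod_range_succ _ _

lemma poch_shift (a q : ℂ) (m : ℕ) : qpoch a q (m+1) = (1 - a) * qpoch (a * q) q m := by
  rw [qpoch, Finset.prod_range_succ']
  simp only [pow_zero, mul_one, qpoch]
  rw [mul_comm]
  congr 1
  refine Finset.prod_congr rfl fun j _ => ?_
  ring

set_option maxHeartbeats 1000000 in
theorem q_pfaff_saalschuetz_paths (b q : ℂ) (hb : b ≠ 0) (hq : q ≠ 0)
    (hbden : ∀ i : ℤ, (1 : ℂ) - b * q ^ i ≠ 0)
    (hqden : ∀ j : ℕ, (1 : ℂ) - q ^ (j + 1) ≠ 0)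
    (n m : ℕ) :
    GF (fun i j => (1 - b * q ^ (2 * i)) * (1 - b * q ^ (2 * i - 1))
        / ((1 - b * q ^ (2 * i + j)) * (1 - b * q ^ (2 * i + j - 1))) * q ^ j) 0 0 n m
    = qpoch (q ^ (n + 1)) q m * qpoch (b * q ^ (n + 1)) q m
      / (qpoch q q m * qpoch (b * q ^ (2 * n + 1)) q m) := by
  have hbn : ∀ k : ℕ, (1 : ℂ) - b * q ^ k ≠ 0 := fun k => by
    have := hbden (k : ℤ); rwa [zpow_natCast] at this
  have hqn : ∀ s m : ℕ, qpoch (q ^ (s + 1)) q m ≠ 0 := by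
    intro s m
    rw [qpoch]
    refine Finset.prod_ne_zero_iff.mpr fun j _ => ?_
    rw [← pow_add]
    have := hqden (s + j)
    rwa [show s + j + 1 = s + 1 + j by ring] at this
  have hbq : ∀ s m : ℕ, qpoch (b * q ^ s) q m ≠ 0 := by
    intro s m
    rw [qpoch]
    refine Finset.prod_ne_zero_iff.mpr fun j _ => ?_
    rw [mul_assoc, ← pow_add]
    exact hbn (s + j)
  have hc : ∀ m, qpoch q q m ≠ 0 := fun m => by
    have := hqn 0 m; rwa [pow_one] at this
  induction n generalizing m with
  | zero =>
    have h1 : GF (fun i j => (1 - b * q ^ (2 * i)) * (1 - b * q ^ (2 * i - 1))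
        / ((1 - b * q ^ (2 * i + j)) * (1 - b * q ^ (2 * i + j - 1))) * q ^ j) 0 0 0 m = 1 := by
      cases m with
      | zero => rw [GF]
      | succ m => rw [GF]
    rw [h1]
    norm_num
    exact (div_self (mul_ne_zero (hc m) (by simpa using hbq 1 m))).symm
  | succ n ih =>
    induction m with
    | zero =>
      rw [GF, ih 0]
      have hz1 : (1:ℂ) - b * q ^ (2 * ((n:ℤ) + 1)) ≠ 0 := hbden _
      have hz2 : (1:ℂ) - b * q ^ (2 * ((n:ℤ) + 1) - 1) ≠ 0 := hbden _
      simp only [qpoch, Finset.range_zero, Finset.prod_empty, div_one, one_mul, mul_one,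
        add_zero, zero_add, zpow_zero]
      rw [div_self (mul_ne_zero hz1 hz2)]
    | succ m ihm =>
      rw [GF, ihm, ih (m+1)]
      -- naturalize zpow exponents
      rw [show 2 * ((0:ℤ) + n + 1) = ((2*n+2 : ℕ) : ℤ) by push_cast; ring,
          show ((2*n+2 : ℕ) : ℤ) - 1 = ((2*n+1 : ℕ) : ℤ) by push_cast; ring,
          show ((2*n+2 : ℕ) : ℤ) + ((0:ℤ) + m + 1) = ((2*n+m+3 : ℕ) : ℤ) by push_cast; ring,
          show ((2*n+m+3 : ℕ) : ℤ) - 1 = ((2*n+m+2 : ℕ) : ℤ) by push_cast; ring,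
          show (0:ℤ) + m + 1 = ((m+1 : ℕ) : ℤ) by push_cast; ring,
          zpow_natCast, zpow_natCast, zpow_natCast, zpow_natCast, zpow_natCast]
      -- normalize nat exponents
      rw [show 2 * (n+1) + 1 = 2*n+3 by ring]
      -- scalar nonzero facts
      have h1 : (1:ℂ) - q * q ^ m ≠ 0 := by rw [← pow_succ']; exact hqden m
      have h2 : (1:ℂ) - q ^ (n+1+1) * q ^ m ≠ 0 := by
        rw [← pow_add, show n+1+1+m = n+1+m+1 by ring]; exact hqden (n+1+m)
      have h3 : (1:ℂ) - b * q ^ (n+1+1) * q ^ m ≠ 0 := by rw [mul_assoc, ← pow_add]; exact hbn _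
      have h4 : (1:ℂ) - b * q ^ (2*n+3) * q ^ m ≠ 0 := by rw [mul_assoc, ← pow_add]; exact hbn _
      have h5 : (1:ℂ) - b * q ^ (2*n+1) * q ^ (m+1) ≠ 0 := by rw [mul_assoc, ← pow_add]; exact hbn _
      have h6 : (1:ℂ) - q ^ (n+1) ≠ 0 := hqden n
      have h7 : (1:ℂ) - b * q ^ (n+1) ≠ 0 := hbn _
      have h8 : (1:ℂ) - b * q ^ (2*n+1) ≠ 0 := hbn _
      have h9 : (1:ℂ) - b * q ^ (2*n+2) ≠ 0 := hbn _
      have h10 : (1:ℂ) - b * q ^ (2*n+m+3) ≠ 0 := hbn _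
      have h11 : (1:ℂ) - b * q ^ (2*n+m+2) ≠ 0 := hbn _
      -- expand (m+1)-pochhammers with shifted base down to level m
      rw [poch_succ (q ^ (n+1+1)), poch_succ (b * q ^ (n+1+1)), poch_succ (b * q ^ (2*n+3))]
      -- express level-m pochhammers through (m+1)-poch atoms
      have e1 : qpoch (q ^ (n+1+1)) q m = qpoch (q ^ (n+1)) q (m+1) / (1 - q ^ (n+1)) := by
        rw [eq_div_iff h6, poch_shift (q ^ (n+1)) q m, ← pow_succ, mul_comm]
      have e2 : qpoch (b * q ^ (n+1+1)) q m = qpoch (b * q ^ (n+1)) q (m+1) / (1 - b * q ^ (n+1)) := by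
        rw [eq_div_iff h7, poch_shift (b * q ^ (n+1)) q m,
            show b * q ^ (n+1) * q = b * q ^ (n+1+1) by rw [mul_assoc, ← pow_succ], mul_comm]
      have eC : qpoch q q m = qpoch q q (m+1) / (1 - q * q ^ m) := by
        rw [eq_div_iff h1, ← poch_succ]
      have e4 : qpoch (b * q ^ (2*n+3)) q m
          = qpoch (b * q ^ (2*n+1)) q (m+1) * (1 - b * q ^ (2*n+1) * q ^ (m+1))
            / ((1 - b * q ^ (2*n+1)) * (1 - b * q ^ (2*n+2))) := by
        rw [eq_div_iff (mul_ne_zero h8 h9), ← poch_succ, poch_shift (b * q ^ (2*n+1)) q (m+1),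
            show b * q ^ (2*n+1) * q = b * q ^ (2*n+2) by rw [mul_assoc, ← pow_succ],
            poch_shift (b * q ^ (2*n+2)) q m,
            show b * q ^ (2*n+2) * q = b * q ^ (2*n+3) by rw [mul_assoc, ← pow_succ]]
        ring
      rw [e1, e2, eC, e4]
      -- atoms
      set A := qpoch (q ^ (n+1)) q (m+1) with hAdef
      set B := qpoch (b * q ^ (n+1)) q (m+1) with hBdef
      set C := qpoch q q (m+1) with hCdef
      set D := qpoch (b * q ^ (2*n+1)) q (m+1) with hDdef
      have hA : A ≠ 0 := hqn n (m+1)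
      have hB : B ≠ 0 := hbq (n+1) (m+1)
      have hC : C ≠ 0 := hc (m+1)
      have hD : D ≠ 0 := hbq (2*n+1) (m+1)
      rw [show (1:ℂ) - b * q ^ (2*n+3) * q ^ m = 1 - b * q ^ (2*n+m+3) by
            rw [mul_assoc, ← pow_add, show 2*n+3+m = 2*n+m+3 by ring],
          show (1:ℂ) - b * q ^ (2*n+1) * q ^ (m+1) = 1 - b * q ^ (2*n+m+2) by
            rw [mul_assoc, ← pow_add, show 2*n+1+(m+1) = 2*n+m+2 by ring]]
      set p6 : ℂ := 1 - q ^ (n+1) with hp6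
      set p7 : ℂ := 1 - b * q ^ (n+1) with hp7
      set p8 : ℂ := 1 - b * q ^ (2*n+1) with hp8
      set p9 : ℂ := 1 - b * q ^ (2*n+2) with hp9
      set s : ℂ := 1 - q * q ^ m with hs
      set f2 : ℂ := 1 - q ^ (n+1+1) * q ^ m with hf2
      set f3 : ℂ := 1 - b * q ^ (n+1+1) * q ^ m with hf3
      set f10 : ℂ := 1 - b * q ^ (2*n+m+3) with hf10
      set f11 : ℂ := 1 - b * q ^ (2*n+m+2) with hf11
      simp only [div_mul_div_comm, mul_div_assoc', div_div_eq_mul_div, div_div, div_mul_eq_mul_div]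
      rw [div_add_div _ _
            (mul_ne_zero (mul_ne_zero h6 h7) (mul_ne_zero hC (mul_ne_zero hD h11)))
            (mul_ne_zero (mul_ne_zero hC hD) (mul_ne_zero h10 h11)),
          div_eq_div_iff
            (mul_ne_zero (mul_ne_zero (mul_ne_zero h6 h7) (mul_ne_zero hC (mul_ne_zero hD h11)))
              (mul_ne_zero (mul_ne_zero hC hD) (mul_ne_zero h10 h11)))
            (mul_ne_zero (mul_ne_zero h6 h7) (mul_ne_zero hC (mul_ne_zero (mul_ne_zero hD h11) h10)))]
      rw [hp6, hp7, hp8, hp9, hs, hf2, hf3, hf10, hf11]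
      ring
end

section
/- (Shift property of the elliptic weight) With w(n,m;a,b) the standard elliptic weight and w_{(s,t)}(n,m;a,b) := w(n,m; a q^{s+2t}, b q^{2s+t}), for all integers n, m, s, t one has w(n+s, m+t; a, b) = w_{(s,0)}(n,t;a,b) · w_{(s,t)}(n,m;a,b), assuming all theta factors in denominators are nonzero. -/
open Finset

noncomputable def w (a b q p : ℂ) (n m : ℤ) : ℂ :=
  theta (a * q ^ (n + 2*m)) p * theta (b * q ^ (2*n)) p * theta (b * q ^ (2*n - 1)) p
    * theta (a * q ^ (1 - n) / b) p * theta (a * q ^ (-n) / b) p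
  / (theta (a * q ^ n) p * theta (b * q ^ (2*n + m)) p * theta (b * q ^ (2*n + m - 1)) p
    * theta (a * q ^ (1 + m - n) / b) p * theta (a * q ^ (m - n) / b) p)
  * q ^ m

noncomputable def W (a b q p : ℂ) (l k n m : ℤ) : ℂ :=
  (qps (q ^ (1 + n - l)) q p (m - k) * qps (a * q ^ (1 + n + 2*k)) q p (m - k)
    * qps (b * q ^ (1 + n + k + l)) q p (m - k) * qps (a * q ^ (1 + k - n) / b) q p (m - k))
  / (qps q q p (m - k) * qps (a * q ^ (1 + l + 2*k)) q p (m - k)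
    * qps (b * q ^ (1 + 2*n + k)) q p (m - k) * qps (a * q ^ (1 + k - l) / b) q p (m - k))
  * ((qps (a * q ^ (1 + l + 2*k)) q p (n - l) * qps (a * q ^ (1 - n) / b) q p (n - l)
    * qps (a * q ^ (-n) / b) q p (n - l))
  / (qps (a * q ^ (1 + l)) q p (n - l) * qps (a * q ^ (1 + k - n) / b) q p (n - l)
    * qps (a * q ^ (k - n) / b) q p (n - l)))
  * (qps (b * q ^ (1 + 2*l)) q p (2*n - 2*l) / qps (b * q ^ (1 + k + 2*l)) q p (2*n - 2*l))
  * q ^ ((n - l) * k)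

attribute [local irreducible] theta pochInf

lemma elliptic_aux (N D N1 D1 N2 D2 X Y Z : ℂ)
    (h : N * X * (D1 * D2) = N1 * Y * (N2 * Z) * D)
    (hD : D ≠ 0) (hD1 : D1 ≠ 0) (hD2 : D2 ≠ 0) :
    N / D * X = N1 / D1 * Y * (N2 / D2 * Z) := by
  field_simp
  linear_combination h

set_option maxHeartbeats 1000000 in
theorem elliptic_weight_shift (a b q p : ℂ) (ha : a ≠ 0) (hb : b ≠ 0) (hq : q ≠ 0)
    (hp : ‖p‖ < 1)
    (hA : ∀ i : ℤ, theta (a * q ^ i) p ≠ 0)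
    (hB : ∀ i : ℤ, theta (b * q ^ i) p ≠ 0)
    (hAB : ∀ i : ℤ, theta (a * q ^ i / b) p ≠ 0)
    (n m s t : ℤ) :
    w a b q p (n + s) (m + t)
      = w (a * q ^ s) (b * q ^ (2 * s)) q p n t
        * w (a * q ^ (s + 2 * t)) (b * q ^ (2 * s + t)) q p n m := by
  have hmul : ∀ x y : ℤ, ∀ c : ℂ, c * q ^ x * q ^ y = c * q ^ (x + y) := fun x y c => by
    rw [mul_assoc, ← zpow_add₀ hq]
  have hdiv : ∀ x y : ℤ, a * q ^ x / (b * q ^ y) = a * q ^ (x - y) / b := fun x y => by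
    rw [zpow_sub₀ hq]; field_simp
  simp only [w, hmul, hdiv]
  apply elliptic_aux
  · rw [zpow_add₀ hq m t]; ring_nf
  all_goals
    repeat' first
      | exact hA _
      | exact hB _
      | exact hAB _
      | apply mul_ne_zero
end

section
/- (Total ellipticity in a) The standard elliptic weight w(n,m;a,b;q,p) is invariant under the substitution a ↦ pa: for all integers n, m and nonzero a, b, q with 0 < |p| < 1, w(n,m;pa,b;q,p) = w(n,m;a,b;q,p), assuming all theta factors in denominators are nonzero. -/
open Finset

open Topology Filter in
private lemma hasProd_zero_of_eq_zero' {f : ℕ → ℂ} (i : ℕ) (h : f i = 0) : HasProd f 0 := by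
  have he : ∀ᶠ s : Finset ℕ in Filter.atTop, (fun _ => (0:ℂ)) s = ∏ b ∈ s, f b := by
    filter_upwards [Filter.eventually_ge_atTop {i}] with s hs
    exact (Finset.prod_eq_zero (hs (Finset.mem_singleton_self i)) h).symm
  exact tendsto_const_nhds.congr' he

open Topology Filter in
private lemma multipliable_poch' (x p : ℂ) (hp : ‖p‖ < 1) :
    Multipliable (fun k : ℕ => 1 - x * p ^ k) := by
  by_cases hz : ∃ i, 1 - x * p ^ i = 0
  · obtain ⟨i, hi⟩ := hz
    exact ⟨0, hasProd_zero_of_eq_zero' i hi⟩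
  push_neg at hz
  have hp' : ‖p‖ < 1 := hp
  have hs : Summable fun k : ℕ => Complex.log (1 - x * p ^ k) := by
    have hten : Filter.Tendsto (fun k : ℕ => ‖x‖ * ‖p‖ ^ k) Filter.atTop (𝓝 0) := by
      simpa using (tendsto_pow_atTop_nhds_zero_of_lt_one (norm_nonneg p) hp').const_mul ‖x‖
    have hev : ∀ᶠ k : ℕ in Filter.atTop, ‖x‖ * ‖p‖ ^ k ≤ 1/2 :=
      hten.eventually_le_const (by norm_num)
    apply Summable.of_norm_bounded_eventually_nat (g := fun k => 3/2 * (‖x‖ * ‖p‖ ^ k))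
    · exact (summable_geometric_of_lt_one (norm_nonneg p) hp').mul_left _ |>.mul_left _
    · filter_upwards [hev] with k hk
      have h1 : ‖-(x * p ^ k)‖ ≤ 1/2 := by
        simpa [norm_mul, norm_pow] using hk
      have := Complex.norm_log_one_add_half_le_self h1
      simpa [sub_eq_add_neg, norm_mul, norm_pow, mul_assoc] using this
  exact Complex.multipliable_of_summable_log hs

private lemma poch_shift' (x p : ℂ) (hp : ‖p‖ < 1) :
    pochInf x p = (1 - x) * pochInf (p * x) p := by
  have hm := multipliable_poch' (p * x) p hp
  have he : (fun k : ℕ => 1 - (p * x) * p ^ k) = (fun k : ℕ => 1 - x * p ^ (k + 1)) := by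
    funext k; ring_nf
  rw [he] at hm
  have h := tprod_eq_zero_mul' (M := ℂ) (f := fun k : ℕ => 1 - x * p ^ k) hm
  simp only [pow_zero, mul_one] at h
  rw [pochInf, h, pochInf, ← he]

private lemma theta_quasi' (x p : ℂ) (hx : x ≠ 0) (hp0 : p ≠ 0) (hp : ‖p‖ < 1) :
    theta (p * x) p = -x⁻¹ * theta x p := by
  have h1 : p / (p * x) = x⁻¹ := by field_simp
  have h2 : pochInf x⁻¹ p = (1 - x⁻¹) * pochInf (p * x⁻¹) p := poch_shift' _ _ hp
  have h3 : pochInf x p = (1 - x) * pochInf (p * x) p := poch_shift' _ _ hp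
  have h4 : p * x⁻¹ = p / x := by rw [div_eq_mul_inv]
  have h5 : (1 - x⁻¹) = -x⁻¹ * (1 - x) := by
    rw [neg_mul, mul_sub, mul_one, inv_mul_cancel₀ hx]; ring
  rw [theta, theta, h1, h2, h4, h5, h3]
  ring

theorem elliptic_weight_total_ellipticity (a b q p : ℂ) (ha : a ≠ 0) (hb : b ≠ 0) (hq : q ≠ 0)
    (hp0 : 0 < ‖p‖) (hp : ‖p‖ < 1)
    (hA : ∀ i : ℤ, theta (a * q ^ i) p ≠ 0)
    (hB : ∀ i : ℤ, theta (b * q ^ i) p ≠ 0)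
    (hAB : ∀ i : ℤ, theta (a * q ^ i / b) p ≠ 0)
    (hPA : ∀ i : ℤ, theta (p * a * q ^ i) p ≠ 0)
    (hPAB : ∀ i : ℤ, theta (p * a * q ^ i / b) p ≠ 0)
    (n m : ℤ) :
    w (p * a) b q p n m = w a b q p n m := by
  have hpne : p ≠ 0 := fun h => by simp [h] at hp0
  have hc : ∀ i : ℤ, a * q ^ i ≠ 0 := fun i => mul_ne_zero ha (zpow_ne_zero i hq)
  have hcb : ∀ i : ℤ, a * q ^ i / b ≠ 0 := fun i => div_ne_zero (hc i) hb
  have quasi : ∀ x : ℂ, x ≠ 0 → theta (p * x) p = -x⁻¹ * theta x p :=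
    fun x hx => theta_quasi' x p hx hpne hp
  have key : (a * q ^ n) * (a * q ^ (1 + m - n) / b) * (a * q ^ (m - n) / b)
      = (a * q ^ (n + 2*m)) * (a * q ^ (1 - n) / b) * (a * q ^ (-n) / b) := by
    have hq3 : q ^ n * q ^ (1 + m - n) * q ^ (m - n)
        = q ^ (n + 2*m) * q ^ (1 - n) * q ^ (-n) := by
      rw [← zpow_add₀ hq, ← zpow_add₀ hq, ← zpow_add₀ hq, ← zpow_add₀ hq]
      congr 1; ring
    calc (a * q ^ n) * (a * q ^ (1 + m - n) / b) * (a * q ^ (m - n) / b)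
        = a^3/b^2 * (q ^ n * q ^ (1 + m - n) * q ^ (m - n)) := by ring
      _ = a^3/b^2 * (q ^ (n + 2*m) * q ^ (1 - n) * q ^ (-n)) := by rw [hq3]
      _ = (a * q ^ (n + 2*m)) * (a * q ^ (1 - n) / b) * (a * q ^ (-n) / b) := by ring
  have hinv : (a * q ^ (n + 2*m))⁻¹ * (a * q ^ (1 - n) / b)⁻¹ * (a * q ^ (-n) / b)⁻¹
      = (a * q ^ n)⁻¹ * (a * q ^ (1 + m - n) / b)⁻¹ * (a * q ^ (m - n) / b)⁻¹ := by
    rw [← mul_inv, ← mul_inv, ← mul_inv, ← mul_inv, key]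
  rw [w, w,
    show p * a * q ^ (n + 2*m) = p * (a * q ^ (n + 2*m)) by ring,
    show p * a * q ^ (1 - n) / b = p * (a * q ^ (1 - n) / b) by ring,
    show p * a * q ^ (-n) / b = p * (a * q ^ (-n) / b) by ring,
    show p * a * q ^ n = p * (a * q ^ n) by ring,
    show p * a * q ^ (1 + m - n) / b = p * (a * q ^ (1 + m - n) / b) by ring,
    show p * a * q ^ (m - n) / b = p * (a * q ^ (m - n) / b) by ring,
    quasi _ (hc (n + 2*m)), quasi _ (hcb (1 - n)), quasi _ (hcb (-n)),
    quasi _ (hc n), quasi _ (hcb (1 + m - n)), quasi _ (hcb (m - n))]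
  have hD1 : -(a * q ^ n)⁻¹ * theta (a * q ^ n) p * theta (b * q ^ (2*n + m)) p
      * theta (b * q ^ (2*n + m - 1)) p
      * (-(a * q ^ (1 + m - n) / b)⁻¹ * theta (a * q ^ (1 + m - n) / b) p)
      * (-(a * q ^ (m - n) / b)⁻¹ * theta (a * q ^ (m - n) / b) p) ≠ 0 := by
    apply mul_ne_zero; apply mul_ne_zero; apply mul_ne_zero; apply mul_ne_zero
    · exact mul_ne_zero (neg_ne_zero.mpr (inv_ne_zero (hc n))) (hA n)
    · exact hB _
    · exact hB _
    · exact mul_ne_zero (neg_ne_zero.mpr (inv_ne_zero (hcb _))) (hAB _)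
    · exact mul_ne_zero (neg_ne_zero.mpr (inv_ne_zero (hcb _))) (hAB _)
  have hD2 : theta (a * q ^ n) p * theta (b * q ^ (2*n + m)) p
      * theta (b * q ^ (2*n + m - 1)) p * theta (a * q ^ (1 + m - n) / b) p
      * theta (a * q ^ (m - n) / b) p ≠ 0 := by
    apply mul_ne_zero; apply mul_ne_zero; apply mul_ne_zero; apply mul_ne_zero
    exacts [hA n, hB _, hB _, hAB _, hAB _]
  rw [div_mul_eq_mul_div, div_mul_eq_mul_div, div_eq_div_iff hD1 hD2]
  linear_combination (-(theta (a * q ^ (n + 2*m)) p * theta (b * q ^ (2*n)) p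
    * theta (b * q ^ (2*n - 1)) p * theta (a * q ^ (1 - n) / b) p
    * theta (a * q ^ (-n) / b) p * theta (a * q ^ n) p * theta (b * q ^ (2*n + m)) p
    * theta (b * q ^ (2*n + m - 1)) p * theta (a * q ^ (1 + m - n) / b) p
    * theta (a * q ^ (m - n) / b) p * q ^ m)) * hinv
end
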